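/- Let d ≥ 1 and λ ≥ 1. For an integer j with |j| ≤ λ/10 let z^j = (j/λ, 0, …, 0) ∈ ℝ^d, let I_j = {y ∈ ℝ^d : |y − z^j| ≤ (100dλ)^{−1}}, and let R_j = {(ξ,s) ∈ ℝ^d × ℝ : |ξ₁ − 2jλ^{−1}s| ≤ λ/10, |ξ_i| ≤ λ/10 for i = 2,…,d, |s| ≤ λ²/100}. For a ∈ ℝ^d and b ∈ ℝ define g_j(y) = χ_{I_j}(y)·e^{i⟨a,y⟩ − ib|y|²}. Then there is a constant c > 0, depending only on d (in particular independent of λ, j, a, b), such that Re[ e^{i⟨ξ−a, z^j⟩ − i(s−b)|z^j|²} · 𝓔g_j(ξ,s) ] ≥ c·λ^{−d} for all (ξ,s) ∈ (a,b) + R_j. -/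

import Mathlib

open MeasureTheory Complex Real
open scoped ENNReal NNReal RealInnerProductSpace SchwartzMap

noncomputable section

abbrev Euc (d : ℕ) : Type := EuclideanSpace ℝ (Fin d)

/-- `e^{it}` as a complex number. -/
def eI (t : ℝ) : ℂ := Complex.exp (Complex.I * (t : ℂ))

/-- Fourier transform with the convention `f̂(ξ) = ∫ f(y) e^{-i⟨y,ξ⟩} dy`. -/
def fourierT (d : ℕ) (f : Euc d → ℂ) (ξ : Euc d) : ℂ :=
  ∫ y : Euc d, f y * eI (-⟪y, ξ⟫)

/-- Schrödinger evolution `Uf(x,t) = e^{itΔ}f(x)`. -/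
def schrodU (d : ℕ) (f : Euc d → ℂ) (x : Euc d) (t : ℝ) : ℂ :=
  (((2 * π) ^ d)⁻¹ : ℝ) • ∫ ξ : Euc d, fourierT d f ξ * eI (-(t * ‖ξ‖ ^ 2) + ⟪x, ξ⟫)

/-- Mixed norm `L^q_x(ℝ^d; L^r_t(I))`. -/
def mixedNorm (d : ℕ) (u : Euc d → ℝ → ℂ) (q r : ℝ≥0∞) (I : Set ℝ) : ℝ≥0∞ :=
  eLpNorm (fun x : Euc d => (eLpNorm (fun t : ℝ => u x t) r (volume.restrict I)).toReal)
    q volume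

/-- Fourier extension (adjoint restriction) operator of the compact paraboloid. -/
def extOp (d : ℕ) (f : Euc d → ℂ) (ξ : Euc d) (s : ℝ) : ℂ :=
  ∫ y in {y : Euc d | ‖y‖ ≤ 1}, f y * eI (s * ‖y‖ ^ 2 - ⟪ξ, y⟫)

/-- `R*(p→q)`: the extension operator is bounded from `L^p(ℝ^d)` to `L^q(ℝ^{d+1})`. -/
def Rstar (d : ℕ) (p q : ℝ≥0∞) : Prop :=
  ∃ C : ℝ≥0, ∀ f : Euc d → ℂ, MemLp f p volume →
    eLpNorm (fun z : Euc d × ℝ => extOp d f z.1 z.2) q volume ≤ C * eLpNorm f p volume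

/-- A radial smooth Littlewood–Paley function, supported in `{1/2 ≤ |ξ| ≤ 2}`, whose
dyadic dilates form a partition of unity off the origin. -/
def IsLP (d : ℕ) (φ : Euc d → ℝ) : Prop :=
  ContDiff ℝ (⊤ : ℕ∞) φ ∧
  Function.support φ ⊆ {ξ : Euc d | 1 / 2 ≤ ‖ξ‖ ∧ ‖ξ‖ ≤ 2} ∧
  (∀ x y : Euc d, ‖x‖ = ‖y‖ → φ x = φ y) ∧
  (∀ ξ : Euc d, ξ ≠ 0 → ∑' k : ℤ, φ ((2 : ℝ) ^ (-k) • ξ) = 1)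

/-- The Littlewood–Paley piece `P_k f` for `k ≥ 1`, given by the multiplier `φ(2^{-k}·)`. -/
def dyadicPiece (d : ℕ) (φ : Euc d → ℝ) (f : Euc d → ℂ) (k : ℕ) (x : Euc d) : ℂ :=
  (((2 * π) ^ d)⁻¹ : ℝ) •
    ∫ ξ : Euc d, (φ ((2 : ℝ) ^ (-(k : ℤ)) • ξ) : ℂ) * fourierT d f ξ * eI (⟪x, ξ⟫)

/-- The pieces of the inhomogeneous Littlewood–Paley decomposition:
`P_k` for `k ≥ 1` and `P_0 = Id - ∑_{k ≥ 1} P_k`. -/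
def besovPiece (d : ℕ) (φ : Euc d → ℝ) (f : Euc d → ℂ) : ℕ → Euc d → ℂ
  | 0 => fun x => f x - ∑' k : ℕ, dyadicPiece d φ f (k + 1) x
  | (k + 1) => fun x => dyadicPiece d φ f (k + 1) x

/-- Besov norm `‖f‖_{B^p_{α,ν}}`. -/
def besovNorm (d : ℕ) (φ : Euc d → ℝ) (p : ℝ≥0∞) (α ν : ℝ) (f : Euc d → ℂ) : ℝ≥0∞ :=
  (∑' k : ℕ, ENNReal.ofReal ((2 : ℝ) ^ ((k : ℝ) * α * ν)) *
      eLpNorm (besovPiece d φ f k) p volume ^ ν) ^ (1 / ν)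

/-- Sobolev norm `‖f‖_{L^p_α} = ‖(Id - Δ)^{α/2} f‖_p`. -/
def sobolevNorm (d : ℕ) (p : ℝ≥0∞) (α : ℝ) (f : Euc d → ℂ) : ℝ≥0∞ :=
  eLpNorm (fun x : Euc d => (((2 * π) ^ d)⁻¹ : ℝ) •
    ∫ ξ : Euc d, (((1 + ‖ξ‖ ^ 2) ^ (α / 2) : ℝ) : ℂ) * fourierT d f ξ * eI (⟪x, ξ⟫)) p volume

/-- The kernel of `e^{itΔ} m(D/λ)`. -/
def freqKernel (d : ℕ) (m : Euc d → ℝ) (lam t : ℝ) (x : Euc d) : ℂ :=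
  (((2 * π) ^ d)⁻¹ : ℝ) • ∫ ξ : Euc d, (m (lam⁻¹ • ξ) : ℂ) * eI (-(t * ‖ξ‖ ^ 2) + ⟪x, ξ⟫)

/-- `e^{itΔ} m(D/λ) f`, defined by convolution with the kernel. -/
def freqEvol (d : ℕ) (m : Euc d → ℝ) (lam : ℝ) (f : Euc d → ℂ) (x : Euc d) (t : ℝ) : ℂ :=
  ∫ y : Euc d, freqKernel d m lam t (x - y) * f y

/-- The mixed norm of `𝓔f((s/λ)ξ, s)` over `ξ ∈ 𝓐(λ) = {3λ ≤ |ξ| ≤ 12λ}`, `s ∈ [λ, 2λ]`. -/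
def extMixed (d : ℕ) (f : Euc d → ℂ) (lam : ℝ) (q r : ℝ≥0∞) : ℝ≥0∞ :=
  eLpNorm (fun ξ : Euc d =>
      (eLpNorm (fun s : ℝ => extOp d f ((s / lam) • ξ) s) r
        (volume.restrict (Set.Icc lam (2 * lam)))).toReal)
    q (volume.restrict {ξ : Euc d | 3 * lam ≤ ‖ξ‖ ∧ ‖ξ‖ ≤ 12 * lam})

/-- The first standard basis vector of `ℝ^d`. -/
def e1 (d : ℕ) (hd : 0 < d) : Euc d := EuclideanSpace.single ⟨0, hd⟩ 1

lemma eI_mul_eI (a b : ℝ) : eI a * eI b = eI (a + b) := by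
  rw [eI, eI, eI, ← Complex.exp_add, Complex.ofReal_add, mul_add]

lemma eI_re (t : ℝ) : (eI t).re = Real.cos t := by
  rw [eI, mul_comm, Complex.exp_ofReal_mul_I_re]

lemma continuous_eI : Continuous eI :=
  Complex.continuous_exp.comp (continuous_const.mul Complex.continuous_ofReal)

lemma coord_le_norm (d : ℕ) (u : Euc d) (i : Fin d) : |u i| ≤ ‖u‖ := by
  have h := abs_real_inner_le_norm (EuclideanSpace.single i (1:ℝ)) u
  simpa [EuclideanSpace.inner_single_left] using h

lemma half_le_cos (x : ℝ) (hb : |x| ≤ 1) : 1/2 ≤ Real.cos x := by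
  have hc := Real.one_sub_sq_div_two_le_cos (x := x)
  have h13 : x ^ 2 ≤ 1 := by nlinarith [abs_nonneg x, _root_.sq_abs x]
  linarith

lemma phase_eq (d : ℕ) (a ξ y e : Euc d) (s b c k : ℝ) (hk : k = 2 * c * (s - b)) :
    (⟪ξ - a, c • e⟫ - (s - b) * ‖c • e‖ ^ 2) +
      ((⟪a, y⟫ - b * ‖y‖ ^ 2) + (s * ‖y‖ ^ 2 - ⟪ξ, y⟫)) =
    (s - b) * ‖y - c • e‖ ^ 2 - ⟪ξ - a - k • e, y - c • e⟫ := by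
  subst hk
  simp only [inner_sub_left, inner_sub_right, real_inner_smul_left, real_inner_smul_right,
    norm_sub_sq_real, norm_smul, real_inner_self_eq_norm_sq, real_inner_comm y e,
    mul_pow, Real.norm_eq_abs]
  rw [_root_.sq_abs]
  ring

set_option maxHeartbeats 1000000 in
/-- Lemma 3.2: the pointwise lower bound for the extension of the modulated
characteristic functions `g_j` on the translated slabs `(a,b) + R_j`. -/
theorem pointwise_lower_bound (d : ℕ) (hd : 0 < d) :
    ∃ c : ℝ, 0 < c ∧
      ∀ lam : ℝ, 1 ≤ lam → ∀ j : ℤ, |(j : ℝ)| ≤ lam / 10 →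
        ∀ a : Euc d, ∀ b : ℝ, ∀ ξ : Euc d, ∀ s : ℝ,
          |⟪ξ - a, e1 d hd⟫ - 2 * (j : ℝ) / lam * (s - b)| ≤ lam / 10 →
          (∀ i : Fin d, i ≠ (⟨0, hd⟩ : Fin d) →
            |⟪ξ - a, EuclideanSpace.single i (1 : ℝ)⟫| ≤ lam / 10) →
          |s - b| ≤ lam ^ 2 / 100 →
          c * ((lam : ℝ) ^ d)⁻¹ ≤
            (eI (⟪ξ - a, ((j : ℝ) / lam) • e1 d hd⟫ -
                  (s - b) * ‖((j : ℝ) / lam) • e1 d hd‖ ^ 2) *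
                extOp d (fun y =>
                  if ‖y - ((j : ℝ) / lam) • e1 d hd‖ ≤ (100 * d * lam)⁻¹ then
                    eI (⟪a, y⟫ - b * ‖y‖ ^ 2) else 0) ξ s).re := by
  have hd0 : (0:ℝ) < (d:ℝ) := by exact_mod_cast hd
  have hd1 : (1:ℝ) ≤ (d:ℝ) := by exact_mod_cast hd
  have hvB : 0 < (volume (Metric.ball (0 : Euc d) 1)).toReal :=
    ENNReal.toReal_pos (Metric.measure_ball_pos volume 0 one_pos).ne' measure_ball_lt_top.ne
  refine ⟨(volume (Metric.ball (0 : Euc d) 1)).toReal * ((100 * (d:ℝ))⁻¹) ^ d / 2,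
    div_pos (mul_pos hvB (pow_pos (inv_pos.mpr (by linarith)) d)) two_pos, ?_⟩
  intro lam hlam j hj a b ξ s h1 h2 h3
  have hlam0 : (0:ℝ) < lam := one_pos.trans_le hlam
  set e : Euc d := e1 d hd with he
  have he_norm : ‖e‖ = 1 := by rw [he, e1, EuclideanSpace.norm_single, norm_one]
  set c0 : ℝ := (j:ℝ) / lam with hc0
  set z : Euc d := c0 • e with hzdef
  set r : ℝ := (100 * (d:ℝ) * lam)⁻¹ with hrdef
  have hr0 : 0 < r := by rw [hrdef]; positivity
  have hz_norm : ‖z‖ ≤ 1/10 := by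
    rw [hzdef, norm_smul, he_norm, mul_one, hc0, Real.norm_eq_abs, abs_div,
      abs_of_pos hlam0, div_le_iff₀ hlam0]
    linarith
  have hr_small : r ≤ 1/100 := by
    rw [hrdef, show (1:ℝ)/100 = ((100:ℝ))⁻¹ by norm_num]
    apply inv_anti₀ (by norm_num)
    nlinarith
  have hsub : Metric.closedBall z r ⊆ {y : Euc d | ‖y‖ ≤ 1} := by
    intro y hy
    rw [Metric.mem_closedBall, dist_eq_norm] at hy
    have h4 := norm_add_le z (y - z)
    rw [show z + (y - z) = y by abel] at h4
    simp only [Set.mem_setOf_eq]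
    linarith
  set P : ℝ := ⟪ξ - a, z⟫ - (s - b) * ‖z‖ ^ 2 with hP
  set Θ : Euc d → ℝ :=
    fun y => P + ((⟪a, y⟫ - b * ‖y‖ ^ 2) + (s * ‖y‖ ^ 2 - ⟪ξ, y⟫)) with hΘ
  have key : eI P * extOp d
      (fun y => if ‖y - z‖ ≤ r then eI (⟪a, y⟫ - b * ‖y‖ ^ 2) else 0) ξ s
      = ∫ y in Metric.closedBall z r, eI (Θ y) := by
    rw [extOp]
    have h5 : ∀ y : Euc d,
        (if ‖y - z‖ ≤ r then eI (⟪a, y⟫ - b * ‖y‖ ^ 2) else 0) *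
          eI (s * ‖y‖ ^ 2 - ⟪ξ, y⟫)
        = Set.indicator (Metric.closedBall z r)
            (fun y => eI ((⟪a, y⟫ - b * ‖y‖ ^ 2) + (s * ‖y‖ ^ 2 - ⟪ξ, y⟫))) y := by
      intro y
      classical
      rw [Set.indicator_apply]
      simp only [Metric.mem_closedBall, dist_eq_norm]
      split_ifs with h
      · rw [eI_mul_eI]
      · rw [zero_mul]
    simp only [h5]
    rw [setIntegral_indicator measurableSet_closedBall,
      Set.inter_eq_self_of_subset_right hsub, ← integral_const_mul]
    simp only [eI_mul_eI, hΘ]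
  have hΘcont : Continuous Θ := by
    rw [hΘ]
    refine continuous_const.add (Continuous.add (Continuous.sub ?_ ?_) (Continuous.sub ?_ ?_))
    · exact continuous_const.inner continuous_id
    · exact continuous_const.mul (continuous_norm.pow 2)
    · exact continuous_const.mul (continuous_norm.pow 2)
    · exact continuous_const.inner continuous_id
  have hint : IntegrableOn (fun y => eI (Θ y)) (Metric.closedBall z r) volume :=
    ((continuous_eI.comp hΘcont).locallyIntegrable (μ := volume)).integrableOn_isCompact
      (isCompact_closedBall z r)
  have hre : (∫ y in Metric.closedBall z r, eI (Θ y)).re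
      = ∫ y in Metric.closedBall z r, Real.cos (Θ y) := by
    have h6 := integral_re hint
    simp only [RCLike.re_to_complex, eI_re] at h6
    exact h6.symm
  set k : ℝ := 2 * (j:ℝ) / lam * (s - b) with hk
  set w : Euc d := ξ - a - k • e with hw
  have hwc : ∀ i : Fin d, |w i| ≤ lam / 10 := by
    intro i
    by_cases hi : i = (⟨0, hd⟩ : Fin d)
    · subst hi
      have h7 : w ⟨0, hd⟩ = ⟪ξ - a, e⟫ - k := by
        simp [hw, he, e1, EuclideanSpace.inner_single_right, EuclideanSpace.single_apply]
      rw [h7]; exact h1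
    · have h7 : w i = ⟪ξ - a, EuclideanSpace.single i (1:ℝ)⟫ := by
        simp [hw, he, e1, EuclideanSpace.inner_single_right, EuclideanSpace.single_apply,
          hi]
      rw [h7]; exact h2 i hi
  have hwinner : ∀ u : Euc d, |⟪w, u⟫| ≤ (d:ℝ) * (lam/10) * ‖u‖ := by
    intro u
    have h8 : ⟪w, u⟫ = ∑ i : Fin d, w i * u i := by
      simp [PiLp.inner_apply]
      exact Finset.sum_congr rfl fun i _ => mul_comm _ _
    rw [h8]
    calc |∑ i : Fin d, w i * u i| ≤ ∑ i : Fin d, |w i * u i| :=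
          Finset.abs_sum_le_sum_abs _ _
      _ ≤ ∑ _i : Fin d, (lam/10) * ‖u‖ := by
          refine Finset.sum_le_sum fun i _ => ?_
          rw [abs_mul]
          exact mul_le_mul (hwc i) (coord_le_norm d u i) (abs_nonneg _) (by positivity)
      _ = (d:ℝ) * (lam/10) * ‖u‖ := by
          rw [Finset.sum_const, Finset.card_univ, Fintype.card_fin, nsmul_eq_mul]; ring
  have hr_eq : (100 * (d:ℝ) * lam) * r = 1 := by
    rw [hrdef]; exact mul_inv_cancel₀ (by positivity)
  have hΘbound : ∀ y ∈ Metric.closedBall z r, |Θ y| ≤ 1 := by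
    intro y hy
    rw [Metric.mem_closedBall, dist_eq_norm] at hy
    have hΘeq : Θ y = (s - b) * ‖y - z‖ ^ 2 - ⟪w, y - z⟫ := by
      simp only [hΘ, hP, hzdef, hw]
      exact phase_eq d a ξ y e s b c0 k (by rw [hk, hc0]; ring)
    rw [hΘeq]
    have h9 := hwinner (y - z)
    have hn0 : (0:ℝ) ≤ ‖y - z‖ := norm_nonneg _
    have h10 : |(s - b) * ‖y - z‖ ^ 2| ≤ lam^2/100 * r^2 := by
      rw [abs_mul, _root_.abs_of_nonneg (by positivity : (0:ℝ) ≤ ‖y - z‖ ^ 2)]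
      have hsq : ‖y - z‖ ^ 2 ≤ r ^ 2 := by nlinarith
      exact mul_le_mul h3 hsq (by positivity) (by positivity)
    have h11 : (d:ℝ) * (lam/10) * ‖y - z‖ ≤ (d:ℝ) * (lam/10) * r := by
      apply mul_le_mul_of_nonneg_left hy (by positivity)
    have h12 := abs_sub ((s - b) * ‖y - z‖ ^ 2) ⟪w, y - z⟫
    have hA : (d:ℝ) * lam * r = 1/100 := by nlinarith [hr_eq]
    have hB : lam * r ≤ 1/100 := by nlinarith [mul_pos hlam0 hr0]
    nlinarith [sq_nonneg (lam * r), mul_pos hlam0 hr0]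
  have hcos : ∀ y ∈ Metric.closedBall z r, (1/2 : ℝ) ≤ Real.cos (Θ y) := by
    intro y hy
    exact half_le_cos _ (hΘbound y hy)
  have hcint : IntegrableOn (fun y => Real.cos (Θ y)) (Metric.closedBall z r) volume :=
    ((Real.continuous_cos.comp hΘcont).locallyIntegrable (μ := volume)).integrableOn_isCompact
      (isCompact_closedBall z r)
  have hmain := setIntegral_ge_of_const_le (μ := volume) (c := (1/2 : ℝ))
    measurableSet_closedBall measure_closedBall_lt_top.ne hcos hcint
  have hvol : (volume (Metric.closedBall z r)).toReal
      = r ^ d * (volume (Metric.ball (0 : Euc d) 1)).toReal := by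
    rw [Measure.addHaar_closedBall volume z hr0.le, finrank_euclideanSpace_fin,
      ENNReal.toReal_mul, ENNReal.toReal_ofReal (by positivity)]
  rw [key, hre]
  refine le_trans ?_ hmain
  rw [measureReal_def, hvol, smul_eq_mul]
  have hrpow : r ^ d = ((100 * (d:ℝ))⁻¹) ^ d * (lam ^ d)⁻¹ := by
    rw [hrdef, mul_inv, mul_pow, inv_pow, inv_pow]
  rw [hrpow]
  exact le_of_eq (by ring)
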